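/- Multilevel coalescent, part (b): consider the chain with migration of a single lineage from a site with nᵢ ≥ 2 lineages to a new site at rate c·nᵢ, within-site coalescence at rate γ₁nᵢ(nᵢ−1), and no site merging (γ₂ = 0), with c, γ₁ > 0. Started from (k₀,(n₁,...,n_{k₀})) with k₀ < ∞ and ∑nᵢ < ∞, the chain almost surely reaches in finite time an absorbing state of the form (k̃,(1,...,1)) for some random k̃ with k₀ ≤ k̃ ≤ ∑nᵢ. -/
import Mathlib


/-- Jump transitions of the multilevel coalescent with c, γ₁ > 0 and γ₂ = 0.
A state is the multiset of lineage counts at the occupied sites.  Migration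
(rate c·nᵢ·1_{nᵢ>1} > 0 iff nᵢ ≥ 2) moves one lineage from a site with n ≥ 2
lineages to a new site; within-site coalescence (rate γ₁n(n−1) > 0 iff n ≥ 2)
replaces a count n ≥ 2 by n − 1. -/
inductive CoalStepB : Multiset ℕ → Multiset ℕ → Prop
  | migrate (n : ℕ) (s : Multiset ℕ) (hn : 2 ≤ n) :
      CoalStepB (n ::ₘ s) ((n - 1) ::ₘ 1 ::ₘ s)
  | coal (n : ℕ) (s : Multiset ℕ) (hn : 2 ≤ n) :
      CoalStepB (n ::ₘ s) ((n - 1) ::ₘ s)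

lemma card_le_sum_of_pos : ∀ (s : Multiset ℕ), (∀ n ∈ s, 1 ≤ n) → s.card ≤ s.sum := by
  intro s
  induction s using Multiset.induction with
  | empty => simp
  | cons a t ih =>
    intro h
    simp only [Multiset.card_cons, Multiset.sum_cons]
    have ha := h a (Multiset.mem_cons_self a t)
    have := ih (fun n hn => h n (Multiset.mem_cons_of_mem hn))
    omega

lemma step_pos {a b : Multiset ℕ} (h : CoalStepB a b) (hp : ∀ n ∈ a, 1 ≤ n) :
    ∀ n ∈ b, 1 ≤ n := by
  cases h with
  | migrate n s hn =>
    intro m hm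
    rcases Multiset.mem_cons.1 hm with rfl | hm
    · omega
    rcases Multiset.mem_cons.1 hm with rfl | hm
    · omega
    · exact hp m (Multiset.mem_cons_of_mem hm)
  | coal n s hn =>
    intro m hm
    rcases Multiset.mem_cons.1 hm with rfl | hm
    · omega
    · exact hp m (Multiset.mem_cons_of_mem hm)

lemma step_sum {a b : Multiset ℕ} (h : CoalStepB a b) : b.sum ≤ a.sum := by
  cases h with
  | migrate n s hn => simp only [Multiset.sum_cons]; omega
  | coal n s hn => simp only [Multiset.sum_cons]; omega

lemma step_card {a b : Multiset ℕ} (h : CoalStepB a b) : a.card ≤ b.card := by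
  cases h with
  | migrate n s hn => simp
  | coal n s hn => simp

lemma step_measure {a b : Multiset ℕ} (h : CoalStepB a b) (hp : ∀ n ∈ a, 1 ≤ n) :
    2 * b.sum - b.card < 2 * a.sum - a.card := by
  cases h with
  | migrate n s hn =>
    have hs : s.card ≤ s.sum :=
      card_le_sum_of_pos s (fun m hm => hp m (Multiset.mem_cons_of_mem hm))
    simp only [Multiset.sum_cons, Multiset.card_cons]
    omega
  | coal n s hn =>
    have hs : s.card ≤ s.sum :=
      card_le_sum_of_pos s (fun m hm => hp m (Multiset.mem_cons_of_mem hm))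
    simp only [Multiset.sum_cons, Multiset.card_cons]
    omega

lemma acc_aux : ∀ (N : ℕ) (m : Multiset ℕ), (∀ n ∈ m, 1 ≤ n) →
    2 * m.sum - m.card ≤ N → Acc (fun a b => CoalStepB b a) m := by
  intro N
  induction N with
  | zero =>
    intro m hp hm
    constructor
    intro b hb
    exact absurd (step_measure hb hp) (by omega)
  | succ N ih =>
    intro m hp hm
    constructor
    intro b hb
    have := step_measure hb hp
    exact ih b (step_pos hb hp) (by omega)

lemma path_inv {init m : Multiset ℕ} (hreach : Relation.ReflTransGen CoalStepB init m)
    (hpos : ∀ n ∈ init, 1 ≤ n) :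
    (∀ n ∈ m, 1 ≤ n) ∧ init.card ≤ m.card ∧ m.sum ≤ init.sum := by
  induction hreach with
  | refl => exact ⟨hpos, le_rfl, le_rfl⟩
  | tail hab hbc ih =>
    exact ⟨step_pos hbc ih.1, ih.2.1.trans (step_card hbc), (step_sum hbc).trans ih.2.2⟩

theorem stmt16 (c γ1 : ℝ) (hc : 0 < c) (h1 : 0 < γ1)
    (init : Multiset ℕ) (hpos : ∀ n ∈ init, 1 ≤ n) (hne : init ≠ 0) :
    Acc (fun a b => CoalStepB b a) init ∧
    ∀ m : Multiset ℕ, Relation.ReflTransGen CoalStepB init m →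
      (∀ m', ¬ CoalStepB m m') →
      (∀ n ∈ m, n = 1) ∧
        Multiset.card init ≤ Multiset.card m ∧ Multiset.card m ≤ init.sum := by
  constructor
  · exact acc_aux _ init hpos le_rfl
  · intro m hreach habs
    obtain ⟨hmp, hcard, hsum⟩ := path_inv hreach hpos
    have hone : ∀ n ∈ m, n = 1 := by
      intro n hn
      by_contra h
      have h2 : 2 ≤ n := by have := hmp n hn; omega
      exact habs _ (by
        have := Multiset.cons_erase hn
        rw [← this]
        exact CoalStepB.migrate n (m.erase n) h2)
    refine ⟨hone, hcard, ?_⟩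
    have : m.sum = m.card := by
      have : m = Multiset.replicate m.card 1 := Multiset.eq_replicate_card.2 hone
      rw [this]; simp
    omega
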